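/- Let p be a random vector in ℝ^D whose components are i.i.d. with mean zero and finite nonzero second moment σ² > 0, and let M be a D×D real matrix. Then E[p_i (M p)_i] / E[p_i²] = M i i, i.e., the ratio form of the diagonal estimation rule is exact in expectation componentwise. -/

import Mathlib

open MeasureTheory ProbabilityTheory

/-- General diagonal estimation rule (Bekas et al.): for a probe vector with i.i.d.
mean-zero components of second moment `σ² > 0`,
`E[pᵢ (M p)ᵢ] / E[pᵢ²] = M i i`. -/
theorem diag_estimation_rule_ratio
    {Ω : Type*} [MeasurableSpace Ω] (μ : Measure Ω) [IsProbabilityMeasure μ]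
    {D : ℕ} (M : Matrix (Fin D) (Fin D) ℝ) (p : Fin D → Ω → ℝ) (σ2 : ℝ)
    (hσ2 : 0 < σ2)
    (hmeas : ∀ i, Measurable (p i))
    (hindep : iIndepFun p μ)
    (hint : ∀ i, Integrable (p i) μ)
    (hint2 : ∀ i, Integrable (fun ω => p i ω ^ 2) μ)
    (hmean : ∀ i, ∫ ω, p i ω ∂μ = 0)
    (hsecond : ∀ i, ∫ ω, p i ω ^ 2 ∂μ = σ2)
    (i : Fin D) :
    (∫ ω, p i ω * (∑ j, M i j * p j ω) ∂μ) / (∫ ω, p i ω ^ 2 ∂μ) = M i i := by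
  have hindep2 : ∀ j, j ≠ i → IndepFun (p i) (p j) μ := fun j hj =>
    hindep.indepFun (Ne.symm hj)
  have hterm : ∀ j : Fin D, Integrable (fun ω => p i ω * (M i j * p j ω)) μ := by
    intro j
    by_cases h : j = i
    · subst h
      simpa [mul_left_comm, sq] using (hint2 j).const_mul (M j j)
    · have := (hindep2 j h).integrable_mul (hint i) (hint j)
      simpa [mul_left_comm] using this.const_mul (M i j)
  have hsum : (∫ ω, p i ω * (∑ j, M i j * p j ω) ∂μ)
      = ∑ j, ∫ ω, p i ω * (M i j * p j ω) ∂μ := by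
    simp_rw [Finset.mul_sum]
    exact integral_finset_sum _ fun j _ => hterm j
  have hval : ∀ j : Fin D, (∫ ω, p i ω * (M i j * p j ω) ∂μ)
      = if j = i then M i i * σ2 else 0 := by
    intro j
    by_cases h : j = i
    · subst h
      simp only [if_pos]
      have : (fun ω => p j ω * (M j j * p j ω)) = fun ω => M j j * p j ω ^ 2 := by
        funext ω; ring
      rw [this, integral_const_mul, hsecond]
    · simp only [if_neg h]
      have : (fun ω => p i ω * (M i j * p j ω)) = fun ω => M i j * (p i ω * p j ω) := by
        funext ω; ring
      have hmul : (∫ ω, p i ω * p j ω ∂μ) = (∫ ω, p i ω ∂μ) * ∫ ω, p j ω ∂μ := by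
        simpa [Pi.mul_apply] using
          (hindep2 j h).integral_mul_eq_mul_integral (hint i).aestronglyMeasurable (hint j).aestronglyMeasurable
      rw [this, integral_const_mul, hmul, hmean i]
      ring
  rw [hsum, hsecond]
  simp only [hval]
  rw [Finset.sum_ite_eq' Finset.univ i fun _ => M i i * σ2]
  simp [hσ2.ne']
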